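/- arXiv:1111.3760 — 5 statements merged into one kernel-verified Lean document; each statement's English description precedes it below -/
import Mathlib

section
/- Let H be a subgroup of a group G and suppose f(h,g) ≠ 0 for all h ∈ H and g ∈ G. Then A_H(f,t) is a (two-sided) ideal of A_G(f,t) if and only if H = G. -/
open Finsupp

/-- Multiplication of the algebra `A_G(f,t)`: `e_a e_b = f(a,b) e_{a∘b∘t}`. -/
noncomputable def mulG {K G : Type*} [Field K] [Group G] (f : G → G → K) (t : G)
    (x y : G →₀ K) : G →₀ K :=
  x.sum fun a xa => y.sum fun b yb => Finsupp.single (a * b * t) (xa * yb * f a b)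

/-- if `f(h,g) ≠ 0` for all `h ∈ H`, `g ∈ G`, then `A_H(f,t)` is a
two-sided ideal of `A_G(f,t)` iff `H = G`. -/
theorem stmt2 {K G : Type*} [Field K] [Group G] (f : G → G → K) (t : G)
    (H : Subgroup G) (hf : ∀ h ∈ H, ∀ g : G, f h g ≠ 0) :
    (∀ x y : G →₀ K,
        x ∈ Submodule.span K ((fun a : G => Finsupp.single a (1 : K)) '' (H : Set G)) →
        mulG f t x y ∈
          Submodule.span K ((fun a : G => Finsupp.single a (1 : K)) '' (H : Set G)) ∧
        mulG f t y x ∈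
          Submodule.span K ((fun a : G => Finsupp.single a (1 : K)) '' (H : Set G)))
      ↔ H = ⊤ := by
  rw [← Finsupp.supported_eq_span_single]
  constructor
  · intro h
    ext g
    simp only [Subgroup.mem_top, iff_true]
    have h1 : (Finsupp.single (1:G) (1:K)) ∈ Finsupp.supported K K (H : Set G) := by
      rw [Finsupp.mem_supported, Finsupp.support_single_ne_zero _ one_ne_zero]
      simpa using H.one_mem
    have hmem := (h (Finsupp.single (1:G) (1:K)) (Finsupp.single (g * t⁻¹) (1:K)) h1).1
    have hm : mulG f t (Finsupp.single (1:G) (1:K)) (Finsupp.single (g*t⁻¹) (1:K))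
        = Finsupp.single g (f 1 (g*t⁻¹)) := by
      unfold mulG
      rw [Finsupp.sum_single_index (by simp)]
      rw [Finsupp.sum_single_index (by simp)]
      simp [mul_assoc]
    rw [hm, Finsupp.mem_supported] at hmem
    have hne : f (1:G) (g*t⁻¹) ≠ 0 := hf 1 H.one_mem _
    have : g ∈ (Finsupp.single g (f 1 (g*t⁻¹))).support := by
      rw [Finsupp.support_single_ne_zero _ hne]; simp
    exact hmem this
  · intro h x y _
    subst h
    constructor <;> · rw [Finsupp.mem_supported]; intro a _; simp
end

section
/- Let G be an additive group, t, t′ ∈ G, and f a solution of the functional equation f(b,c)f(a,b+c+t) = f(a,b)f(a+b+t,c) − f(a,c)f(a+c+t,b). Define g(a,b) := f(a−(t−t′), b−(t−t′)). Then g satisfies the same functional equation with t replaced by t′, and the map φ(e_i) = e′_{i+t−t′} is an algebra isomorphism from L(f,t) to L(g,t′). -/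
open Finsupp

/-- Multiplication of the algebra `L(f,t)`: `e_a e_b = f(a,b) e_{a+b+t}`. -/
noncomputable def mulA {K G : Type*} [Field K] [AddCommGroup G] (f : G → G → K) (t : G)
    (x y : G →₀ K) : G →₀ K :=
  x.sum fun a xa => y.sum fun b yb => Finsupp.single (a + b + t) (xa * yb * f a b)

/-- The shifted structure function `g(a,b) = f(a − d, b − d)`. -/
def shiftF {K G : Type*} [AddCommGroup G] (f : G → G → K) (d : G) : G → G → K :=
  fun a b => f (a - d) (b - d)

/-- The linear map `φ(e_i) = e_{i + d}`. -/
noncomputable def shiftMap {K G : Type*} [Field K] [AddCommGroup G] (d : G) :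
    (G →₀ K) → (G →₀ K) :=
  fun x => Finsupp.equivMapDomain (Equiv.addRight d) x

lemma shiftMap_eq {K G : Type*} [Field K] [AddCommGroup G] (d : G) (x : G →₀ K) :
    shiftMap d x = Finsupp.domCongr (M := K) (Equiv.addRight d) x := rfl

/-- if `f ∈ F_t` then `g(a,b) := f(a−(t−t'), b−(t−t')) ∈ F_{t'}` and
`φ(e_i) = e_{i+t−t'}` is an algebra isomorphism `L(f,t) ≅ L(g,t')`. -/
theorem stmt7 {K G : Type*} [Field K] [AddCommGroup G] (f : G → G → K) (t t' : G)
    (hf : ∀ a b c : G,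
      f b c * f a (b + c + t) = f a b * f (a + b + t) c - f a c * f (a + c + t) b) :
    (∀ a b c : G,
        shiftF f (t - t') b c * shiftF f (t - t') a (b + c + t') =
          shiftF f (t - t') a b * shiftF f (t - t') (a + b + t') c -
            shiftF f (t - t') a c * shiftF f (t - t') (a + c + t') b) ∧
    Function.Bijective (shiftMap (t - t') : (G →₀ K) → (G →₀ K)) ∧
    (∀ x y : G →₀ K, shiftMap (t - t') (x + y) = shiftMap (t - t') x + shiftMap (t - t') y) ∧
    (∀ (c : K) (x : G →₀ K), shiftMap (t - t') (c • x) = c • shiftMap (t - t') x) ∧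
    (∀ x y : G →₀ K,
        shiftMap (t - t') (mulA f t x y) =
          mulA (shiftF f (t - t')) t' (shiftMap (t - t') x) (shiftMap (t - t') y)) := by
  set d := t - t' with hd
  refine ⟨?_, ?_, ?_, ?_, ?_⟩
  · intro a b c
    have h := hf (a - d) (b - d) (c - d)
    have e1 : b + c + t' - d = (b - d) + (c - d) + t := by
      simp only [hd]; abel
    have e2 : a + b + t' - d = (a - d) + (b - d) + t := by
      simp only [hd]; abel
    have e3 : a + c + t' - d = (a - d) + (c - d) + t := by
      simp only [hd]; abel
    simp only [shiftF, e1, e2, e3]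
    exact h
  · exact (Finsupp.domCongr (M := K) (Equiv.addRight d)).toEquiv.bijective
  · intro x y; simp [shiftMap_eq, map_add]
  · intro c x
    ext a
    simp [shiftMap_eq]
  · intro x y
    have hsum : ∀ (z : G →₀ K) (g : G → K → (G →₀ K)),
        Finsupp.equivMapDomain (Equiv.addRight d) (z.sum g) =
          z.sum (fun a v => Finsupp.equivMapDomain (Equiv.addRight d) (g a v)) :=
      fun z g => map_finsuppSum (Finsupp.domCongr (M := K) (Equiv.addRight d)) z g
    show Finsupp.equivMapDomain (Equiv.addRight d) (mulA f t x y) = _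
    simp only [mulA, hsum, Finsupp.equivMapDomain_single]
    show _ = (Finsupp.equivMapDomain (Equiv.addRight d) x).sum fun a xa =>
      (Finsupp.equivMapDomain (Equiv.addRight d) y).sum fun b yb =>
        Finsupp.single (a + b + t') (xa * yb * shiftF f d a b)
    simp only [Finsupp.sum_equivMapDomain]
    refine Finsupp.sum_congr fun a _ => Finsupp.sum_congr fun b _ => ?_
    have h1 : Equiv.addRight d (a + b + t) =
        Equiv.addRight d a + Equiv.addRight d b + t' := by
      simp only [Equiv.coe_addRight, hd]; abel
    have h2 : shiftF f d (Equiv.addRight d a) (Equiv.addRight d b) = f a b := by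
      simp [shiftF]
    rw [h1, h2]
end

section
/- Over the group ℤ₂ = {0̄, 1̄} with t = 0̄, a function f : ℤ₂ × ℤ₂ → K makes A_{ℤ₂}(f, 0̄) a Leibniz algebra (i.e., f solves the functional equation f(b,c)f(a,b+c) = f(a,b)f(a+b,c) − f(a,c)f(a+c,b)) if and only if the matrix (f(a,b)) is one of: [[0,0],[α,0]], [[0,−α],[α,0]], or [[0,0],[0,α]] for some α ∈ K. -/
/-- over `ℤ₂` with `t = 0̄`, `f` solves the Leibniz functional equation
iff its matrix is one of `[[0,0],[α,0]]`, `[[0,−α],[α,0]]`, `[[0,0],[0,α]]`. -/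
theorem stmt10 {K : Type*} [Field K] (f : ZMod 2 → ZMod 2 → K) :
    (∀ a b c : ZMod 2,
        f b c * f a (b + c) = f a b * f (a + b) c - f a c * f (a + c) b) ↔
      ((∃ α : K, f 0 0 = 0 ∧ f 0 1 = 0 ∧ f 1 0 = α ∧ f 1 1 = 0) ∨
        (∃ α : K, f 0 0 = 0 ∧ f 0 1 = -α ∧ f 1 0 = α ∧ f 1 1 = 0) ∨
        (∃ α : K, f 0 0 = 0 ∧ f 0 1 = 0 ∧ f 1 0 = 0 ∧ f 1 1 = α)) := by
  have e11 : (1 + 1 : ZMod 2) = 0 := by decide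
  have e01 : (0 + 1 : ZMod 2) = 1 := by decide
  have e10 : (1 + 0 : ZMod 2) = 1 := by decide
  have e00 : (0 + 0 : ZMod 2) = 0 := by decide
  have cases2 : ∀ x : ZMod 2, x = 0 ∨ x = 1 := by decide
  constructor
  · intro h
    have h000 := h 0 0 0
    have h001 := h 0 0 1
    have h101 := h 1 0 1
    have h111 := h 1 1 1
    simp only [e00, e01, e10, e11] at h000 h001 h101 h111
    have hw : f 0 0 = 0 := by
      have : f 0 0 * f 0 0 = 0 := by linear_combination h000
      exact mul_self_eq_zero.mp this
    rw [hw] at h001 h101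
    have hyz : f 1 1 * f 1 0 = 0 := by linear_combination h111
    by_cases hz : f 1 1 = 0
    · by_cases hx : f 0 1 = 0
      · exact Or.inl ⟨f 1 0, hw, hx, rfl, hz⟩
      · refine Or.inr (Or.inl ⟨f 1 0, hw, ?_, rfl, hz⟩)
        have h2 : f 0 1 * (f 0 1 + f 1 0) = 0 := by linear_combination h001
        rcases mul_eq_zero.mp h2 with h' | h'
        · exact absurd h' hx
        · linear_combination h'
    · have hy : f 1 0 = 0 := by
        rcases mul_eq_zero.mp hyz with h' | h'
        · exact absurd h' hz
        · exact h'
      have hx : f 0 1 = 0 := by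
        rw [hy] at h101
        have h2 : f 0 1 * f 1 1 = 0 := by linear_combination h101
        rcases mul_eq_zero.mp h2 with h' | h'
        · exact h'
        · exact absurd h' hz
      exact Or.inr (Or.inr ⟨f 1 1, hw, hx, hy, rfl⟩)
  · rintro (⟨α, h1, h2, h3, h4⟩ | ⟨α, h1, h2, h3, h4⟩ | ⟨α, h1, h2, h3, h4⟩) <;>
      intro a b c <;>
      rcases cases2 a with rfl | rfl <;> rcases cases2 b with rfl | rfl <;>
      rcases cases2 c with rfl | rfl <;>
      simp only [e00, e01, e10, e11, h1, h2, h3, h4] <;> ring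
end

section
/- The three 2ℤ-periodic Leibniz algebras L₁: e_{2k−1}e_{2m} = e_{2(k+m)−1}; L₂: e_{2k}e_{2m−1} = −e_{2(k+m)−1}, e_{2k−1}e_{2m} = e_{2(k+m)−1}; and L₃: e_{2k−1}e_{2m−1} = e_{2(k+m−1)} (all other products zero) are pairwise non-isomorphic. -/
open Finsupp

/-- Multiplication with structure constants `c`: `e_a e_b = c(a,b) e_{a+b}`. -/
noncomputable def mulZ {K : Type*} [Field K] (c : ℤ → ℤ → K) (x y : ℤ →₀ K) : ℤ →₀ K :=
  x.sum fun a xa => y.sum fun b yb => Finsupp.single (a + b) (xa * yb * c a b)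

/-- `L₁ : e_{2k−1} e_{2m} = e_{2(k+m)−1}`, all other products zero. -/
def c1 (K : Type*) [Field K] : ℤ → ℤ → K :=
  fun a b => if a % 2 = 1 ∧ b % 2 = 0 then 1 else 0

/-- `L₂ : e_{2k} e_{2m−1} = −e_{2(k+m)−1}`, `e_{2k−1} e_{2m} = e_{2(k+m)−1}`. -/
def c2 (K : Type*) [Field K] : ℤ → ℤ → K :=
  fun a b =>
    if a % 2 = 0 ∧ b % 2 = 1 then -1 else if a % 2 = 1 ∧ b % 2 = 0 then 1 else 0

/-- `L₃ : e_{2k−1} e_{2m−1} = e_{2(k+m−1)}`, all other products zero. -/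
def c3 (K : Type*) [Field K] : ℤ → ℤ → K :=
  fun a b => if a % 2 = 1 ∧ b % 2 = 1 then 1 else 0

/- Auxiliary lemmas -/

lemma mulZ_single {K : Type*} [Field K] (c : ℤ → ℤ → K) (a b : ℤ) (x y : K) :
    mulZ c (Finsupp.single a x) (Finsupp.single b y)
      = Finsupp.single (a + b) (x * y * c a b) := by
  classical
  unfold mulZ
  rw [Finsupp.sum_single_index, Finsupp.sum_single_index]
  · simp
  · rw [Finsupp.sum_single_index] <;> simp

lemma mulZ_comm_of {K : Type*} [Field K] (c : ℤ → ℤ → K)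
    (h : ∀ a b, c b a = c a b) (x y : ℤ →₀ K) :
    mulZ c y x = mulZ c x y := by
  unfold mulZ
  rw [Finsupp.sum_comm]
  refine Finsupp.sum_congr fun a _ => Finsupp.sum_congr fun b _ => ?_
  rw [h, add_comm b a, mul_comm (y b) (x a)]

lemma mulZ_skew_of {K : Type*} [Field K] (c : ℤ → ℤ → K)
    (h : ∀ a b, c b a = -c a b) (x y : ℤ →₀ K) :
    mulZ c y x = - mulZ c x y := by
  unfold mulZ
  rw [Finsupp.sum_comm]
  simp only [Finsupp.sum]
  rw [← Finset.sum_neg_distrib]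
  refine Finset.sum_congr rfl fun a _ => ?_
  rw [← Finset.sum_neg_distrib]
  refine Finset.sum_congr rfl fun b _ => ?_
  rw [h, add_comm b a, mul_comm (y b) (x a), mul_neg, Finsupp.single_neg]

lemma c2_skew {K : Type*} [Field K] : ∀ a b : ℤ, c2 K b a = - c2 K a b := by
  intro a b
  unfold c2
  rcases Int.emod_two_eq a with ha | ha <;> rcases Int.emod_two_eq b with hb | hb <;>
    simp [ha, hb]

lemma c3_symm {K : Type*} [Field K] : ∀ a b : ℤ, c3 K b a = c3 K a b := by
  intro a b
  unfold c3
  rcases Int.emod_two_eq a with ha | ha <;> rcases Int.emod_two_eq b with hb | hb <;>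
    simp [ha, hb]

/-- the three `2ℤ`-periodic Leibniz algebras `L₁, L₂, L₃` are pairwise
non-isomorphic (char K ≠ 2). -/
theorem stmt12 {K : Type*} [Field K] (h2 : (2 : K) ≠ 0) :
    (¬ ∃ φ : (ℤ →₀ K) ≃ₗ[K] (ℤ →₀ K),
        ∀ x y : ℤ →₀ K, φ (mulZ (c1 K) x y) = mulZ (c2 K) (φ x) (φ y)) ∧
    (¬ ∃ φ : (ℤ →₀ K) ≃ₗ[K] (ℤ →₀ K),
        ∀ x y : ℤ →₀ K, φ (mulZ (c1 K) x y) = mulZ (c3 K) (φ x) (φ y)) ∧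
    (¬ ∃ φ : (ℤ →₀ K) ≃ₗ[K] (ℤ →₀ K),
        ∀ x y : ℤ →₀ K, φ (mulZ (c2 K) x y) = mulZ (c3 K) (φ x) (φ y)) := by
  refine ⟨?_, ?_, ?_⟩
  · -- L₁ ≄ L₂ : L₂ is skew, pull back to L₁
    rintro ⟨φ, hφ⟩
    have key : ∀ x y : ℤ →₀ K, mulZ (c1 K) y x = - mulZ (c1 K) x y := by
      intro x y
      apply φ.injective
      rw [map_neg, hφ, hφ, mulZ_skew_of _ c2_skew]
    have h := key (Finsupp.single (1 : ℤ) (1 : K)) (Finsupp.single (0 : ℤ) (1 : K))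
    rw [mulZ_single, mulZ_single] at h
    have h1 : c1 K 1 0 = 1 := by simp [c1]
    have h0 : c1 K 0 1 = 0 := by simp [c1]
    rw [h1, h0] at h
    simp only [mul_zero, Finsupp.single_zero, zero_add, add_zero, mul_one, neg_zero] at h
    exact (one_ne_zero (α := K)) (Finsupp.single_eq_zero.mp (neg_eq_zero.mp h.symm))
  · -- L₁ ≄ L₃ : L₃ is commutative, pull back to L₁
    rintro ⟨φ, hφ⟩
    have key : ∀ x y : ℤ →₀ K, mulZ (c1 K) y x = mulZ (c1 K) x y := by
      intro x y
      apply φ.injective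
      rw [hφ, hφ, mulZ_comm_of _ c3_symm]
    have h := key (Finsupp.single (1 : ℤ) (1 : K)) (Finsupp.single (0 : ℤ) (1 : K))
    rw [mulZ_single, mulZ_single] at h
    have h1 : c1 K 1 0 = 1 := by simp [c1]
    have h0 : c1 K 0 1 = 0 := by simp [c1]
    rw [h1, h0] at h
    simp only [mul_zero, Finsupp.single_zero, zero_add, add_zero, mul_one] at h
    exact (one_ne_zero (α := K)) (Finsupp.single_eq_zero.mp h.symm)
  · -- L₂ ≄ L₃ : L₃ is commutative, pull back to L₂
    rintro ⟨φ, hφ⟩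
    have key : ∀ x y : ℤ →₀ K, mulZ (c2 K) y x = mulZ (c2 K) x y := by
      intro x y
      apply φ.injective
      rw [hφ, hφ, mulZ_comm_of _ c3_symm]
    have h := key (Finsupp.single (1 : ℤ) (1 : K)) (Finsupp.single (0 : ℤ) (1 : K))
    rw [mulZ_single, mulZ_single] at h
    have h1 : c2 K 1 0 = 1 := by simp [c2]
    have h0 : c2 K 0 1 = -1 := by simp [c2]
    rw [h1, h0] at h
    simp only [mul_one, zero_add, add_zero, one_mul] at h
    have := DFunLike.congr_fun h 1
    simp only [Finsupp.single_eq_same] at this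
    exact h2 (by linear_combination -this)
end

section
/- In an nℤ-periodic algebra L with structure matrix (α_{ij}), the basis element e_{nk+i} with i ≢ 0 (mod n) and gcd(i,n)=1 is right nilpotent if and only if some entry of the i-th column of (α_{ij}) is zero; specifically, e_{nk+i}^{(n+1)_r} = α_{0,i}α_{1,i}⋯α_{n−1,i}·e_{n(nk+k+i)+i}, where x^{(m)_r} denotes the left-normed right power (…((xx)x)…)x with m factors. -/
open Finsupp

/-- Multiplication of an `nℤ`-periodic algebra with structure matrix `α`. -/
noncomputable def mulN {K : Type*} [Field K] (n : ℕ) (α : ZMod n → ZMod n → K)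
    (x y : ℤ →₀ K) : ℤ →₀ K :=
  x.sum fun a xa => y.sum fun b yb =>
    Finsupp.single (a + b) (xa * yb * α (a : ZMod n) (b : ZMod n))

/-- Left-normed right powers: `rpowN n α x m = x^{(m+1)_r}`, i.e.
`rpowN … 0 = x` and `rpowN … (m+1) = (rpowN … m) · x`. -/
noncomputable def rpowN {K : Type*} [Field K] (n : ℕ) (α : ZMod n → ZMod n → K)
    (x : ℤ →₀ K) : ℕ → ℤ →₀ K
  | 0 => x
  | m + 1 => mulN n α (rpowN n α x m) x

lemma mulN_single {K : Type*} [Field K] (n : ℕ) (α : ZMod n → ZMod n → K)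
    (a b : ℤ) (c d : K) :
    mulN n α (Finsupp.single a c) (Finsupp.single b d) =
      Finsupp.single (a + b) (c * d * α ((a : ℤ) : ZMod n) ((b : ℤ) : ZMod n)) := by
  rw [mulN, Finsupp.sum_single_index, Finsupp.sum_single_index]
  · simp
  · simp

lemma rpow_single {K : Type*} [Field K] (n : ℕ) (α : ZMod n → ZMod n → K)
    (k i : ℤ) (m : ℕ) :
    rpowN n α (Finsupp.single ((n : ℤ) * k + i) (1 : K)) m =
      Finsupp.single (((m : ℤ) + 1) * ((n : ℤ) * k + i))
        (∏ j ∈ Finset.range m, α (((((j : ℤ) + 1) * i : ℤ)) : ZMod n) ((i : ℤ) : ZMod n)) := by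
  induction m with
  | zero => simp [rpowN]
  | succ m ih =>
    rw [rpowN, ih, mulN_single, Finset.prod_range_succ]
    have h1 : (((n : ℤ) * k + i : ℤ) : ZMod n) = ((i : ℤ) : ZMod n) := by
      push_cast; simp
    have h2 : ((((m : ℤ) + 1) * ((n : ℤ) * k + i) : ℤ) : ZMod n)
        = ((((m : ℤ) + 1) * i : ℤ) : ZMod n) := by
      push_cast; simp
    rw [h1, h2]
    congr 1
    · push_cast; ring
    · push_cast; ring

lemma prod_range_zmod {K : Type*} [CommMonoid K] (n : ℕ) [NeZero n] (g : ZMod n → K) :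
    ∏ j ∈ Finset.range n, g ((j : ℕ) : ZMod n) = ∏ x : ZMod n, g x := by
  refine Finset.prod_nbij' (fun j => ((j : ℕ) : ZMod n)) (fun x => x.val) ?_ ?_ ?_ ?_ ?_
  · intro a _; exact Finset.mem_univ _
  · intro x _; exact Finset.mem_range.mpr x.val_lt
  · intro a ha; exact ZMod.val_cast_of_lt (Finset.mem_range.mp ha)
  · intro x _; simp [ZMod.natCast_val]
  · intro a _; rfl

/-- for `i ≢ 0 (mod n)` with `gcd(i,n) = 1`,
`e_{nk+i}^{(n+1)_r} = α_{0,i} α_{1,i} ⋯ α_{n−1,i} · e_{n(nk+k+i)+i}`, and `e_{nk+i}` is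
right nilpotent iff some entry of the `i`-th column of `α` is zero. -/
theorem stmt15 {K : Type*} [Field K] (n : ℕ) (hn : 0 < n) (α : ZMod n → ZMod n → K)
    (k i : ℤ) (hi0 : ¬ ((n : ℤ) ∣ i)) (hcop : IsCoprime i (n : ℤ)) :
    rpowN n α (Finsupp.single ((n : ℤ) * k + i) (1 : K)) n =
        (∏ j ∈ Finset.range n, α ((j : ℤ) : ZMod n) (i : ZMod n)) •
          Finsupp.single ((n : ℤ) * ((n : ℤ) * k + k + i) + i) (1 : K) ∧
      ((∃ m : ℕ, rpowN n α (Finsupp.single ((n : ℤ) * k + i) (1 : K)) m = 0) ↔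
        ∃ j : ZMod n, α j (i : ZMod n) = 0) := by
  haveI : NeZero n := ⟨hn.ne'⟩
  -- `i` is a unit mod `n`
  obtain ⟨u, v, huv⟩ := hcop
  set w : ZMod n := ((i : ℤ) : ZMod n) with hw
  have hwu : ((u : ℤ) : ZMod n) * w = 1 := by
    have := congrArg (fun z : ℤ => ((z : ZMod n))) huv
    push_cast at this
    simpa [hw, mul_comm] using this
  -- the bijection x ↦ (x + 1) * w of ZMod n
  have hσ : Function.Bijective (fun x : ZMod n => (x + 1) * w) := by
    refine Function.bijective_iff_has_inverse.mpr
      ⟨fun y => y * ((u : ℤ) : ZMod n) - 1, ?_, ?_⟩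
    · intro x
      simp [mul_assoc, mul_comm w, hwu]
    · intro y
      have : y * ((u : ℤ) : ZMod n) * w = y := by
        rw [mul_assoc, hwu, mul_one]
      simp [sub_add_cancel, this]
  -- the two products coincide
  have hprod : (∏ j ∈ Finset.range n, α (((((j : ℤ) + 1) * i : ℤ)) : ZMod n) w)
      = ∏ j ∈ Finset.range n, α ((j : ℤ) : ZMod n) w := by
    have hcast : ∀ j : ℕ, ((((j : ℤ) + 1) * i : ℤ) : ZMod n)
        = (((j : ℕ) : ZMod n) + 1) * w := by
      intro j; push_cast [hw]; ring
    calc (∏ j ∈ Finset.range n, α (((((j : ℤ) + 1) * i : ℤ)) : ZMod n) w)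
        = ∏ j ∈ Finset.range n, α ((((j : ℕ) : ZMod n) + 1) * w) w := by
          exact Finset.prod_congr rfl fun j _ => by rw [hcast j]
      _ = ∏ x : ZMod n, α ((x + 1) * w) w := prod_range_zmod n (fun x => α ((x + 1) * w) w)
      _ = ∏ x : ZMod n, α x w := Function.Bijective.prod_comp hσ (fun x => α x w)
      _ = ∏ j ∈ Finset.range n, α ((j : ℕ) : ZMod n) w := (prod_range_zmod n (fun x => α x w)).symm
      _ = ∏ j ∈ Finset.range n, α ((j : ℤ) : ZMod n) w := by
          exact Finset.prod_congr rfl fun j _ => by push_cast; ring_nf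
  constructor
  · rw [rpow_single, hprod]
    have hidx : ((n : ℤ) + 1) * ((n : ℤ) * k + i)
        = (n : ℤ) * ((n : ℤ) * k + k + i) + i := by ring
    rw [hidx, Finsupp.smul_single, smul_eq_mul, mul_one]
  · constructor
    · rintro ⟨m, hm⟩
      rw [rpow_single, Finsupp.single_eq_zero] at hm
      obtain ⟨j, _, hj⟩ := Finset.prod_eq_zero_iff.mp hm
      exact ⟨_, hj⟩
    · rintro ⟨j, hj⟩
      refine ⟨n, ?_⟩
      rw [rpow_single, Finsupp.single_eq_zero, hprod]
      have : (∏ j ∈ Finset.range n, α ((j : ℤ) : ZMod n) w)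
          = ∏ x : ZMod n, α x w := by
        rw [← prod_range_zmod n (fun x => α x w)]
        exact Finset.prod_congr rfl fun j _ => by push_cast; ring_nf
      rw [this]
      exact Finset.prod_eq_zero (Finset.mem_univ j) hj
end
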